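/- Let n ≥ 1, let Φ be a Young function, and let φ be a positive measurable function on (0,∞) such that inf_{t ≥ r} φ(t)/Φ^{-1}(t^{-n}) > 0 for every r > 0. Define ψ(r) = Φ^{-1}(r^{-n}) · inf_{t ≥ r} φ(t)/Φ^{-1}(t^{-n}) for r > 0. Then r ↦ ψ(r)/Φ^{-1}(r^{-n}) is increasing, and M^{Φ,φ}(ℝⁿ) = M^{Φ,ψ}(ℝⁿ) with ‖f‖_{M^{Φ,ψ}} = ‖f‖_{M^{Φ,φ}} for every f. -/

import Mathlib

open MeasureTheory Metric Set Filter
open scoped ENNReal NNReal Topology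

noncomputable section

/-- A Young function `Φ : [0,∞] → [0,∞]`: convex, left-continuous, vanishing (with limit `0`)
at `0`, and equal (with limit) to `∞` at `∞`. -/
structure IsYoung (Φ : ℝ≥0∞ → ℝ≥0∞) : Prop where
  map_zero : Φ 0 = 0
  convex : ∀ p q x y : ℝ≥0∞, p + q = 1 → Φ (p * x + q * y) ≤ p * Φ x + q * Φ y
  left_continuous : ∀ r : ℝ≥0∞, Φ r = ⨆ s ∈ Set.Iio r, Φ s
  tendsto_zero : Filter.Tendsto Φ (nhdsWithin 0 (Set.Ioi 0)) (nhds 0)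
  map_top : Φ ⊤ = ⊤
  tendsto_top : Filter.Tendsto (fun r : ℝ≥0 => Φ (r : ℝ≥0∞)) Filter.atTop (nhds ⊤)

/-- The generalized (O'Neil) inverse `Φ⁻¹(s) = inf {r ≥ 0 : Φ(r) > s}` (with `inf ∅ = ∞`). -/
def yInv (Φ : ℝ≥0∞ → ℝ≥0∞) (s : ℝ≥0∞) : ℝ≥0∞ := sInf {r : ℝ≥0∞ | s < Φ r}

/-- `r^{-n}` as an extended nonnegative real. -/
def rinv (n : ℕ) (r : ℝ) : ℝ≥0∞ := ENNReal.ofReal ((r ^ n)⁻¹)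

variable {α : Type*}

/-- Luxemburg (quasi-)norm of an `ℝ≥0∞`-valued function. -/
def luxNorm (Φ : ℝ≥0∞ → ℝ≥0∞) [MeasurableSpace α] (μ : Measure α) (g : α → ℝ≥0∞) : ℝ≥0∞ :=
  sInf {lam : ℝ≥0∞ | 0 < lam ∧ lam ≠ ⊤ ∧ (∫⁻ x, Φ (g x / lam) ∂μ) ≤ 1}

/-- Weak Luxemburg quasi-norm: `sup_{λ>0} ‖λ χ_{{g>λ}}‖_{L^Φ}`. -/
def wluxNorm (Φ : ℝ≥0∞ → ℝ≥0∞) [MeasurableSpace α] (μ : Measure α) (g : α → ℝ≥0∞) : ℝ≥0∞ :=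
  ⨆ (lam : ℝ≥0∞) (_ : 0 < lam) (_ : lam ≠ ⊤),
    luxNorm Φ μ (({x | lam < g x}).indicator (fun _ => lam))

/-- `|f|` regarded as an `ℝ≥0∞`-valued function. -/
def enn (f : α → ℝ) : α → ℝ≥0∞ := fun x => (‖f x‖₊ : ℝ≥0∞)

/-- Euclidean space `ℝⁿ`. -/
abbrev Euc (n : ℕ) := EuclideanSpace ℝ (Fin n)

/-- The generalized fractional integral operator `I_ρ`. -/
def Irho (n : ℕ) (ρ : ℝ → ℝ) (f : Euc n → ℝ) (x : Euc n) : ℝ :=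
  ∫ y, (ρ (dist x y) / (dist x y) ^ n) * f y

/-- The Hardy–Littlewood maximal operator. -/
def maxOp (n : ℕ) (f : Euc n → ℝ) (x : Euc n) : ℝ≥0∞ :=
  ⨆ (r : ℝ) (_ : 0 < r), (volume (ball x r))⁻¹ * ∫⁻ y in ball x r, (‖f y‖₊ : ℝ≥0∞)

/-- The generalized fractional maximal operator `M_ρ`. -/
def Mrho (n : ℕ) (ρ : ℝ → ℝ) (f : Euc n → ℝ) (x : Euc n) : ℝ≥0∞ :=
  ⨆ (r : ℝ) (_ : 0 < r),
    ENNReal.ofReal (ρ r) * ((volume (ball x r))⁻¹ * ∫⁻ y in ball x r, (‖f y‖₊ : ℝ≥0∞))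

/-- The `∇₂` condition: `Φ(r) ≤ (1/(2C)) Φ(C r)` for some `C > 1`. -/
def Nabla2 (Φ : ℝ≥0∞ → ℝ≥0∞) : Prop :=
  ∃ C : ℝ, 1 < C ∧ ∀ r : ℝ≥0∞, Φ r ≤ ENNReal.ofReal (1 / (2 * C)) * Φ (ENNReal.ofReal C * r)

/-- `∫₀¹ ρ(t)/t dt < ∞`. -/
def RhoInt (ρ : ℝ → ℝ) : Prop :=
  (∫⁻ t in Set.Ioo (0:ℝ) 1, ENNReal.ofReal (ρ t / t)) < ⊤

/-- `sup_{r/2 ≤ t ≤ r} ρ(t) ≤ C ∫_{k₁ r}^{k₂ r} ρ(t)/t dt` for all `r > 0`. -/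
def RhoSupWith (ρ : ℝ → ℝ) (C k₁ k₂ : ℝ) : Prop :=
  0 < C ∧ 0 < k₁ ∧ k₁ < k₂ ∧ ∀ r > (0:ℝ), ∀ t ∈ Set.Icc (r / 2) r,
    ENNReal.ofReal (ρ t) ≤
      ENNReal.ofReal C * ∫⁻ s in Set.Ioo (k₁ * r) (k₂ * r), ENNReal.ofReal (ρ s / s)

def RhoSup (ρ : ℝ → ℝ) : Prop := ∃ C k₁ k₂ : ℝ, RhoSupWith ρ C k₁ k₂

/-- The condition
`Φ⁻¹(r^{-n}) ∫₀^r ρ(t)/t dt + ∫_r^∞ ρ(t) Φ⁻¹(t^{-n}) dt/t ≤ C Ψ⁻¹(r^{-n})`. -/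
def CondOrl (n : ℕ) (Φ Ψ : ℝ≥0∞ → ℝ≥0∞) (ρ : ℝ → ℝ) : Prop :=
  ∃ C : ℝ, 0 < C ∧ ∀ r > (0:ℝ),
    yInv Φ (rinv n r) * (∫⁻ t in Set.Ioo (0:ℝ) r, ENNReal.ofReal (ρ t / t))
      + (∫⁻ t in Set.Ioi r, ENNReal.ofReal (ρ t / t) * yInv Φ (rinv n t))
    ≤ ENNReal.ofReal C * yInv Ψ (rinv n r)

/-- Generalized Orlicz–Morrey norm (third kind). -/
def morNorm (n : ℕ) (Φ : ℝ≥0∞ → ℝ≥0∞) (φ : ℝ → ℝ≥0∞) (g : Euc n → ℝ≥0∞) : ℝ≥0∞ :=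
  ⨆ (x : Euc n) (r : ℝ) (_ : 0 < r),
    (φ r)⁻¹ * yInv Φ (rinv n r) * luxNorm Φ volume ((ball x r).indicator g)

/-- Weak generalized Orlicz–Morrey norm (third kind). -/
def wMorNorm (n : ℕ) (Φ : ℝ≥0∞ → ℝ≥0∞) (φ : ℝ → ℝ≥0∞) (g : Euc n → ℝ≥0∞) : ℝ≥0∞ :=
  ⨆ (x : Euc n) (r : ℝ) (_ : 0 < r),
    (φ r)⁻¹ * yInv Φ (rinv n r) * wluxNorm Φ volume ((ball x r).indicator g)

/-- A real positive function regarded as `ℝ≥0∞`-valued. -/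
def ofR (φ : ℝ → ℝ) : ℝ → ℝ≥0∞ := fun t => ENNReal.ofReal (φ t)

/-- Almost increasing (on `(0,∞)`). -/
def AlmostInc (g : ℝ → ℝ≥0∞) : Prop :=
  ∃ C : ℝ, 0 < C ∧ ∀ r s : ℝ, 0 < r → r ≤ s → g r ≤ ENNReal.ofReal C * g s

/-- Almost decreasing (on `(0,∞)`). -/
def AlmostDec (g : ℝ → ℝ≥0∞) : Prop :=
  ∃ C : ℝ, 0 < C ∧ ∀ r s : ℝ, 0 < r → r ≤ s → ENNReal.ofReal C * g s ≤ g r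

/-- The class `G_Φ`: `φ` is positive, `t ↦ φ(t)/Φ⁻¹(t^{-n})` is almost increasing and
`t ↦ φ(t)/(Φ⁻¹(t^{-n}) tⁿ)` is almost decreasing. -/
def GPhi (n : ℕ) (Φ : ℝ≥0∞ → ℝ≥0∞) (φ : ℝ → ℝ) : Prop :=
  (∀ t > (0:ℝ), 0 < φ t) ∧
  AlmostInc (fun t => ENNReal.ofReal (φ t) / yInv Φ (rinv n t)) ∧
  AlmostDec (fun t => ENNReal.ofReal (φ t) / (yInv Φ (rinv n t) * ENNReal.ofReal (t ^ n)))


/-- The auxiliary function `ψ(r) = Φ⁻¹(r^{-n}) · inf_{t ≥ r} φ(t)/Φ⁻¹(t^{-n})`. -/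
def psiAux (n : ℕ) (Φ : ℝ≥0∞ → ℝ≥0∞) (φ : ℝ → ℝ) (r : ℝ) : ℝ≥0∞ :=
  yInv Φ (rinv n r) * ⨅ (t : ℝ) (_ : r ≤ t), ENNReal.ofReal (φ t) / yInv Φ (rinv n t)

/-- A Young function is monotone, by left-continuity. -/
lemma young_mono {Φ : ℝ≥0∞ → ℝ≥0∞} (hΦ : IsYoung Φ) : Monotone Φ := by
  intro a b hab
  rw [hΦ.left_continuous a, hΦ.left_continuous b]
  exact biSup_mono fun s hs => lt_of_lt_of_le hs hab

/-- The generalized inverse is nonzero at positive arguments. -/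
lemma yInv_ne_zero {Φ : ℝ≥0∞ → ℝ≥0∞} (hΦ : IsYoung Φ) {s : ℝ≥0∞} (hs : s ≠ 0) :
    yInv Φ s ≠ 0 := by
  have h : ∀ᶠ x in nhdsWithin 0 (Set.Ioi 0), Φ x < s :=
    hΦ.tendsto_zero.eventually_lt_const hs.bot_lt
  rw [eventually_nhdsWithin_iff] at h
  obtain ⟨ε, hε, hIio⟩ := ENNReal.nhds_zero_basis.eventually_iff.mp h
  have : ε ≤ yInv Φ s := by
    apply le_sInf
    intro b hb
    by_contra hcon
    push_neg at hcon
    rcases eq_or_ne b 0 with rfl | hb0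
    · simp only [Set.mem_setOf_eq, hΦ.map_zero] at hb
      exact (not_lt.2 (zero_le : (0:ℝ≥0∞) ≤ s)) hb
    · exact absurd hb (not_lt.2 (hIio hcon hb0.bot_lt).le)
  exact fun h0 => (hε.ne' (le_antisymm (h0 ▸ this) zero_le))

/-- The generalized inverse is finite at finite arguments. -/
lemma yInv_ne_top {Φ : ℝ≥0∞ → ℝ≥0∞} (hΦ : IsYoung Φ) {s : ℝ≥0∞} (hs : s ≠ ⊤) :
    yInv Φ s ≠ ⊤ := by
  have hmem : Set.Ioi s ∈ nhds (⊤ : ℝ≥0∞) := isOpen_Ioi.mem_nhds (lt_top_iff_ne_top.2 hs)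
  obtain ⟨r, hr⟩ := (hΦ.tendsto_top.eventually hmem).exists
  exact ne_top_of_le_ne_top ENNReal.coe_ne_top (sInf_le hr)

lemma rinv_ne_zero {n : ℕ} {r : ℝ} (hr : 0 < r) : rinv n r ≠ 0 := by
  simp only [rinv, ne_eq, ENNReal.ofReal_eq_zero, not_le]
  positivity

/-- Monotonicity of the Luxemburg norm. -/
lemma luxNorm_mono {Φ : ℝ≥0∞ → ℝ≥0∞} (hΦ : IsYoung Φ) [MeasurableSpace α]
    (μ : Measure α) {g g' : α → ℝ≥0∞} (h : ∀ x, g x ≤ g' x) :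
    luxNorm Φ μ g ≤ luxNorm Φ μ g' := by
  apply sInf_le_sInf
  rintro lam ⟨h1, h2, h3⟩
  exact ⟨h1, h2, le_trans (lintegral_mono fun x =>
    young_mono hΦ (ENNReal.div_le_div_right (h x) lam)) h3⟩

/-- `r ↦ ψ(r)/Φ⁻¹(r^{-n})` is increasing and `M^{Φ,φ} = M^{Φ,ψ}` with equal
norms. -/
theorem stmt9 (n : ℕ) (hn : 1 ≤ n) (Φ : ℝ≥0∞ → ℝ≥0∞) (hΦ : IsYoung Φ)
    (φ : ℝ → ℝ) (hφm : Measurable φ) (hφpos : ∀ t > (0:ℝ), 0 < φ t)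
    (hinf : ∀ r > (0:ℝ),
      0 < ⨅ (t : ℝ) (_ : r ≤ t), ENNReal.ofReal (φ t) / yInv Φ (rinv n t)) :
    (∀ r s : ℝ, 0 < r → r ≤ s →
      psiAux n Φ φ r / yInv Φ (rinv n r) ≤ psiAux n Φ φ s / yInv Φ (rinv n s)) ∧
    (∀ f : Euc n → ℝ,
      morNorm n Φ (psiAux n Φ φ) (enn f) = morNorm n Φ (ofR φ) (enn f)) := by
  set a : ℝ → ℝ≥0∞ := fun r => yInv Φ (rinv n r) with ha_def
  have ha0 : ∀ r : ℝ, 0 < r → a r ≠ 0 := fun r hr => yInv_ne_zero hΦ (rinv_ne_zero hr)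
  have hat : ∀ r : ℝ, 0 < r → a r ≠ ⊤ := fun r _ => yInv_ne_top hΦ ENNReal.ofReal_ne_top
  set I : ℝ → ℝ≥0∞ := fun r => ⨅ (t : ℝ) (_ : r ≤ t), ENNReal.ofReal (φ t) / a t with hI_def
  have hpsi : ∀ r : ℝ, psiAux n Φ φ r = a r * I r := fun r => rfl
  have hIle : ∀ r s : ℝ, r ≤ s → I r ≤ I s := by
    intro r s hrs
    exact le_iInf₂ fun t ht => iInf₂_le t (hrs.trans ht)
  have hdiv : ∀ r : ℝ, 0 < r → psiAux n Φ φ r / a r = I r := by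
    intro r hr
    rw [hpsi, mul_comm, mul_div_assoc, ENNReal.div_self (ha0 r hr) (hat r hr), mul_one]
  have hinvmul : ∀ r : ℝ, 0 < r →
      (psiAux n Φ φ r)⁻¹ * a r = ⨆ (t : ℝ) (_ : r ≤ t), a t / ENNReal.ofReal (φ t) := by
    intro r hr
    rw [hpsi, ENNReal.mul_inv (Or.inl (ha0 r hr)) (Or.inl (hat r hr)), mul_comm (a r)⁻¹,
      mul_assoc, ENNReal.inv_mul_cancel (ha0 r hr) (hat r hr), mul_one, hI_def]
    rw [ENNReal.inv_iInf]
    refine iSup_congr fun t => ?_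
    rw [ENNReal.inv_iInf]
    refine iSup_congr fun ht => ?_
    have ht0 : 0 < t := hr.trans_le ht
    exact ENNReal.inv_div (Or.inl (hat t ht0)) (Or.inl (ha0 t ht0))
  have hpsile : ∀ r : ℝ, 0 < r → psiAux n Φ φ r ≤ ENNReal.ofReal (φ r) := by
    intro r hr
    calc psiAux n Φ φ r = a r * I r := hpsi r
      _ ≤ a r * (ENNReal.ofReal (φ r) / a r) :=
          mul_le_mul_right (iInf₂_le r le_rfl) _
      _ = ENNReal.ofReal (φ r) := ENNReal.mul_div_cancel (ha0 r hr) (hat r hr)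
  constructor
  · intro r s hr hrs
    rw [hdiv r hr, hdiv s (hr.trans_le hrs)]
    exact hIle r s hrs
  · intro f
    apply le_antisymm
    · -- morNorm ψ ≤ morNorm φ
      refine iSup_le fun x => iSup_le fun r => iSup_le fun hr => ?_
      rw [hinvmul r hr, ENNReal.iSup_mul]
      refine iSup_le fun t => ?_
      rw [ENNReal.iSup_mul]
      refine iSup_le fun ht => ?_
      have ht0 : 0 < t := hr.trans_le ht
      have hLle : luxNorm Φ volume ((ball x r).indicator (enn f)) ≤
          luxNorm Φ volume ((ball x t).indicator (enn f)) :=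
        luxNorm_mono hΦ volume fun y =>
          Set.indicator_le_indicator_of_subset (ball_subset_ball ht) (fun _ => zero_le) y
      calc a t / ENNReal.ofReal (φ t) * luxNorm Φ volume ((ball x r).indicator (enn f))
          ≤ a t / ENNReal.ofReal (φ t) * luxNorm Φ volume ((ball x t).indicator (enn f)) :=
            mul_le_mul_right hLle _
        _ = (ofR φ t)⁻¹ * a t * luxNorm Φ volume ((ball x t).indicator (enn f)) := by
            rw [div_eq_mul_inv, mul_comm (a t)]; rfl
        _ ≤ morNorm n Φ (ofR φ) (enn f) :=
            le_iSup_of_le x (le_iSup_of_le t (le_iSup_of_le ht0 le_rfl))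
    · -- morNorm φ ≤ morNorm ψ
      refine iSup_le fun x => iSup_le fun r => iSup_le fun hr => ?_
      refine le_iSup_of_le x (le_iSup_of_le r (le_iSup_of_le hr ?_))
      refine mul_le_mul_left (mul_le_mul_left ?_ _) _
      exact ENNReal.inv_le_inv.2 (hpsile r hr)

end
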